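/- On the infinite dyadic tree with unit conductance and origin the empty word, the dipole functions v_x satisfy ⟨v_x, v_y⟩_E = #(γ(x) ∩ γ(y)), the number of common edges in the unique paths from the root to x and to y, for all nonempty finite binary words x, y. -/

import Mathlib

/-- Nonempty finite binary words: each such word `w` corresponds to the unique
tree edge `(w.dropLast, w)` joining it to its parent. -/
abbrev TreeEdge := {w : List Bool // w ≠ []}

/-- The energy inner product on the dyadic tree with unit conductance:
`⟨f,g⟩_E = ½ ΣΣ_{x∼y} (f(x)−f(y))(g(x)−g(y))`, written as a sum over edges. -/
noncomputable def energyInner (f g : List Bool → ℝ) : ℝ :=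
  ∑' w : TreeEdge, (f w.1 - f w.1.dropLast) * (g w.1 - g w.1.dropLast)

/-- A function on the tree has finite energy when its edge increments are
square-summable. -/
def FiniteEnergy (f : List Bool → ℝ) : Prop :=
  Summable fun w : TreeEdge => (f w.1 - f w.1.dropLast) ^ 2

/-- The set of edges on the unique path from the root `o = []` to `x`,
identified with the set of nonempty prefixes of `x`. -/
def rootPath (x : List Bool) : Set (List Bool) := {w | w ≠ [] ∧ w <+: x}

theorem prefix_concat_iff' (u l : List Bool) (b : Bool) :
    u <+: l ++ [b] ↔ u = l ++ [b] ∨ u <+: l := by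
  constructor
  · rintro ⟨t, ht⟩
    rcases List.eq_nil_or_concat t with rfl | ⟨t', c, rfl⟩
    · left; simpa using ht
    · right
      rw [List.concat_eq_append, ← List.append_assoc] at ht
      have := List.append_inj' ht rfl
      exact ⟨t', this.1⟩
  · rintro (rfl | h)
    · exact List.prefix_refl _
    · exact h.trans (List.prefix_append l [b])

/-- The finset of nonempty prefixes of `x`. -/
def pf (x : List Bool) : Finset (List Bool) := x.inits.toFinset.erase []

lemma mem_pf {x w : List Bool} : w ∈ pf x ↔ w ≠ [] ∧ w <+: x := by
  simp [pf, List.mem_inits]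

lemma rootPath_eq (x : List Bool) : rootPath x = ↑(pf x) := by
  ext w; simp [rootPath, mem_pf]

lemma pf_nil : pf ([] : List Bool) = ∅ := by
  ext w; simp [mem_pf, List.prefix_nil]

lemma pf_concat (l : List Bool) (b : Bool) :
    pf (l ++ [b]) = insert (l ++ [b]) (pf l) := by
  ext u
  simp only [mem_pf, prefix_concat_iff', Finset.mem_insert]
  constructor
  · rintro ⟨hu, rfl | h⟩
    · exact Or.inl rfl
    · exact Or.inr ⟨hu, h⟩
  · rintro (rfl | ⟨hu, h⟩)
    · exact ⟨by simp, Or.inl rfl⟩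
    · exact ⟨hu, Or.inr h⟩

lemma concat_not_mem_pf (l : List Bool) (b : Bool) : l ++ [b] ∉ pf l := by
  intro h
  have := (mem_pf.mp h).2.length_le
  simp at this

lemma sum_pf (g : List Bool → ℝ) (x : List Bool) :
    ∑ w ∈ pf x, (g w - g w.dropLast) = g x - g [] := by
  induction x using List.reverseRecOn with
  | nil => simp [pf_nil]
  | append_singleton l b ih =>
    rw [pf_concat, Finset.sum_insert (concat_not_mem_pf l b), List.dropLast_concat, ih]
    ring

/-- The auxiliary finite-energy function `w ↦ #(γ(x) ∩ γ(w))`. -/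
noncomputable def fx (x : List Bool) : List Bool → ℝ :=
  fun w => ((pf x ∩ pf w).card : ℝ)

lemma fx_nil (x : List Bool) : fx x [] = 0 := by simp [fx, pf_nil]

lemma fx_inc (x : List Bool) (e : TreeEdge) :
    fx x e.1 - fx x e.1.dropLast = if e.1 ∈ pf x then 1 else 0 := by
  obtain ⟨w, hw⟩ := e
  rcases List.eq_nil_or_concat w with rfl | ⟨l, b, rfl⟩
  · exact absurd rfl hw
  simp only [List.concat_eq_append] at hw ⊢
  simp only [fx, List.dropLast_concat, pf_concat]
  by_cases hmem : l ++ [b] ∈ pf x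
  · rw [Finset.inter_insert_of_mem hmem,
      Finset.card_insert_of_notMem (fun h => concat_not_mem_pf l b (Finset.mem_inter.mp h).2),
      if_pos hmem]
    push_cast; ring
  · rw [Finset.inter_insert_of_notMem hmem, if_neg hmem]; ring

/-- The finset of tree edges lying on the root path to `x`. -/
noncomputable def Tx (x : List Bool) : Finset TreeEdge :=
  (pf x).attach.map ⟨fun w => ⟨w.1, (mem_pf.mp w.2).1⟩,
    fun a b h => Subtype.ext (by simpa using congrArg Subtype.val h)⟩

lemma mem_Tx {x : List Bool} {e : TreeEdge} : e ∈ Tx x ↔ e.1 ∈ pf x := by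
  simp only [Tx, Finset.mem_map, Finset.mem_attach, Function.Embedding.coeFn_mk, true_and]
  constructor
  · rintro ⟨a, rfl⟩; exact a.2
  · intro h; exact ⟨⟨e.1, h⟩, Subtype.ext rfl⟩

lemma fx_FE (x : List Bool) : FiniteEnergy (fx x) := by
  apply summable_of_ne_finset_zero (s := Tx x)
  intro e he
  rw [fx_inc, if_neg (fun h => he (mem_Tx.mpr h))]
  ring

lemma energyInner_fx (g : List Bool → ℝ) (x : List Bool) :
    energyInner g (fx x) = g x - g [] := by
  unfold energyInner
  rw [tsum_eq_sum (s := Tx x) (fun e he => by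
    rw [fx_inc, if_neg (fun h => he (mem_Tx.mpr h))]; ring)]
  have : ∀ e ∈ Tx x, (g e.1 - g e.1.dropLast) * (fx x e.1 - fx x e.1.dropLast)
      = g e.1 - g e.1.dropLast := by
    intro e he
    rw [fx_inc, if_pos (mem_Tx.mp he)]; ring
  rw [Finset.sum_congr rfl this, Tx, Finset.sum_map]
  exact (Finset.sum_attach (pf x) (fun w => g w - g w.dropLast)).trans (sum_pf g x)


/-- On the dyadic tree with unit conductance, the dipoles `v_x` (the
reproducing vectors for `f ↦ f(x) − f(o)` in the energy Hilbert space) satisfy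
`⟨v_x, v_y⟩_E = #(γ(x) ∩ γ(y))`, the number of common edges of the root paths
to `x` and to `y`, for all nonempty binary words `x, y`. -/
theorem tree_dipole_gram_eq_card_common_path
    (v : List Bool → (List Bool → ℝ))
    (hvE : ∀ x, FiniteEnergy (v x))
    (hrepro : ∀ (x : List Bool) (f : List Bool → ℝ), FiniteEnergy f →
      energyInner (v x) f = f x - f []) :
    ∀ x y : List Bool, x ≠ [] → y ≠ [] →
      energyInner (v x) (v y) = ((rootPath x ∩ rootPath y).ncard : ℝ) := by
  intro x y hx hy
  rw [hrepro x (v y) (hvE y), ← energyInner_fx (v y) x, hrepro y (fx x) (fx_FE x),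
    fx_nil, rootPath_eq, rootPath_eq, ← Finset.coe_inter, Set.ncard_coe_finset]
  simp [fx]
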